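/- arXiv:2412.18685 — 2 statements merged into one kernel-verified Lean document; each statement's English description precedes it below -/
import Mathlib

section
/- Let ρ = Σ_{i=1}^N r_i and suppose ρ > 0. Set ω_i = u_i^max − u_i^old for each i. If ρ·Δt ≤ (min_{1≤i≤N} m_i)·(Σ_{j=1}^N ω_j), then there exists a vector q ∈ ℝ^N with Σ_{i=1}^N q_i = 0 such that for every i, u_i^min ≤ u_i^old + (Δt/m_i)(r_i + q_i) ≤ u_i^max. (Case ρ > 0 of the Solvability Theorem: the feasible set of the optimization problem is nonempty.) -/
/-- Case ρ > 0 of the Solvability Theorem: if ρ·Δt ≤ (min_i m_i)·(Σ_j ω_j)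
with ω_i = u_i^max − u_i^old, then the feasible set is nonempty. -/
theorem solvability_rho_pos (N : ℕ) (hN : 0 < N) (Δt : ℝ) (hΔt : 0 < Δt)
    (m r uold umin umax : Fin N → ℝ)
    (hm : ∀ i, 0 < m i)
    (hbounds : ∀ i, umin i ≤ uold i ∧ uold i ≤ umax i)
    (ρ : ℝ) (hρ : ρ = ∑ i, r i) (hρpos : 0 < ρ)
    (ω : Fin N → ℝ) (hω : ∀ i, ω i = umax i - uold i)
    (hsolv : ρ * Δt ≤
      (Finset.univ.inf' (Finset.univ_nonempty_iff.mpr (Fin.pos_iff_nonempty.mp hN)) m) *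
        (∑ j, ω j)) :
    ∃ q : Fin N → ℝ, (∑ i, q i = 0) ∧
      ∀ i, umin i ≤ uold i + (Δt / m i) * (r i + q i) ∧
        uold i + (Δt / m i) * (r i + q i) ≤ umax i := by
  set ne : Finset.univ.Nonempty :=
    (Finset.univ_nonempty_iff.mpr (Fin.pos_iff_nonempty.mp hN))
  set mmin := Finset.univ.inf' ne m with hmmin
  set Ω := ∑ j, ω j with hΩ
  have hmminpos : 0 < mmin := by
    obtain ⟨i, _, hi⟩ := Finset.exists_mem_eq_inf' ne m
    rw [hmmin, hi]; exact hm i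
  have hωnn : ∀ i, 0 ≤ ω i := fun i => by
    rw [hω i]; linarith [(hbounds i).2]
  have hΩpos : 0 < Ω := by
    by_contra h
    push_neg at h
    have : mmin * Ω ≤ 0 := mul_nonpos_of_nonneg_of_nonpos hmminpos.le h
    nlinarith
  refine ⟨fun i => -r i + (ρ / Ω) * ω i, ?_, ?_⟩
  · rw [Finset.sum_add_distrib, Finset.sum_neg_distrib, ← Finset.mul_sum, ← hΩ, ← hρ]
    field_simp
    ring
  · intro i
    have hmi := hm i
    have hfac : r i + (-r i + (ρ / Ω) * ω i) = (ρ / Ω) * ω i := by ring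
    rw [hfac]
    have hnn : 0 ≤ (Δt / m i) * ((ρ / Ω) * ω i) := by
      have := hωnn i; positivity
    constructor
    · have := (hbounds i).1
      nlinarith [div_nonneg hΔt.le hmi.le, div_nonneg hρpos.le hΩpos.le, hωnn i]
    · -- need (Δt / m i) * ((ρ / Ω) * ω i) ≤ ω i
      have hmin_le : mmin ≤ m i := Finset.inf'_le m (Finset.mem_univ i)
      have key : ρ * Δt * ω i ≤ m i * Ω * ω i := by
        nlinarith [mul_le_mul_of_nonneg_right hsolv (hωnn i),
          mul_le_mul_of_nonneg_right (mul_le_mul_of_nonneg_right hmin_le hΩpos.le) (hωnn i)]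
      have hpos : 0 < m i * Ω := by positivity
      have h2 : (Δt / m i) * ((ρ / Ω) * ω i) ≤ ω i := by
        rw [show (Δt / m i) * ((ρ / Ω) * ω i) = (ρ * Δt * ω i) / (m i * Ω) by
          field_simp]
        rw [div_le_iff₀ hpos]
        nlinarith
      have := hω i
      linarith
end

section
/- Let ρ = Σ_{i=1}^N r_i and suppose ρ < 0. Set ω_i = u_i^old − u_i^min for each i. If (−ρ)·Δt ≤ (min_{1≤i≤N} m_i)·(Σ_{j=1}^N ω_j), then there exists a vector q ∈ ℝ^N with Σ_{i=1}^N q_i = 0 such that for every i, u_i^min ≤ u_i^old + (Δt/m_i)(r_i + q_i) ≤ u_i^max. (Case ρ < 0 of the Solvability Theorem, with the solvability condition written for the magnitude of ρ.) -/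
/-- Case ρ < 0 of the Solvability Theorem: if (−ρ)·Δt ≤ (min_i m_i)·(Σ_j ω_j)
with ω_i = u_i^old − u_i^min, then the feasible set is nonempty. -/
theorem solvability_rho_neg (N : ℕ) (hN : 0 < N) (Δt : ℝ) (hΔt : 0 < Δt)
    (m r uold umin umax : Fin N → ℝ)
    (hm : ∀ i, 0 < m i)
    (hbounds : ∀ i, umin i ≤ uold i ∧ uold i ≤ umax i)
    (ρ : ℝ) (hρ : ρ = ∑ i, r i) (hρneg : ρ < 0)
    (ω : Fin N → ℝ) (hω : ∀ i, ω i = uold i - umin i)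
    (hsolv : (-ρ) * Δt ≤
      (Finset.univ.inf' (Finset.univ_nonempty_iff.mpr (Fin.pos_iff_nonempty.mp hN)) m) *
        (∑ j, ω j)) :
    ∃ q : Fin N → ℝ, (∑ i, q i = 0) ∧
      ∀ i, umin i ≤ uold i + (Δt / m i) * (r i + q i) ∧
        uold i + (Δt / m i) * (r i + q i) ≤ umax i := by
  set ne : Finset.univ.Nonempty :=
    Finset.univ_nonempty_iff.mpr (Fin.pos_iff_nonempty.mp hN)
  set mmin := Finset.univ.inf' ne m with hmmin
  set S := ∑ j, ω j with hS
  have hmminpos : 0 < mmin := by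
    obtain ⟨i, _, hi⟩ := Finset.exists_mem_eq_inf' ne m
    rw [hmmin, hi]; exact hm i
  have hωnn : ∀ i, 0 ≤ ω i := fun i => by rw [hω i]; linarith [(hbounds i).1]
  have hSpos : 0 < S := by
    have h1 : 0 < (-ρ) * Δt := mul_pos (by linarith) hΔt
    nlinarith
  refine ⟨fun i => -r i + ρ * ω i / S, ?_, ?_⟩
  · rw [Finset.sum_add_distrib, Finset.sum_neg_distrib, ← hρ]
    have : ∑ i, ρ * ω i / S = ρ * S / S := by
      rw [← Finset.sum_div, ← Finset.mul_sum]
    rw [this, mul_div_assoc, div_self hSpos.ne', mul_one]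
    ring
  · intro i
    have hmi := hm i
    have hkey : (-ρ) * Δt ≤ m i * S := by
      have : mmin ≤ m i := Finset.inf'_le m (Finset.mem_univ i)
      nlinarith
    have hval : uold i + (Δt / m i) * (r i + (-r i + ρ * ω i / S)) =
        uold i + Δt * ρ * ω i / (m i * S) := by
      field_simp; ring
    constructor
    · have h1 : -(ω i) * (m i * S) ≤ Δt * ρ * ω i := by
        nlinarith [mul_le_mul_of_nonneg_right hkey (hωnn i)]
      have h2 : -(ω i) ≤ Δt * ρ * ω i / (m i * S) :=
        (le_div_iff₀ (mul_pos hmi hSpos)).mpr h1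
      rw [hval]
      linarith [hω i]
    · rw [hval]
      have : Δt * ρ * ω i / (m i * S) ≤ 0 := by
        apply div_nonpos_of_nonpos_of_nonneg
        · nlinarith [mul_nonneg hΔt.le (hωnn i)]
        · positivity
      linarith [(hbounds i).2]
end
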